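/- Let F(R) := ∫_R^1 e^t/t² dt for R ∈ (0,1) and r(R) := 1/F(R). Then there exists δ > 0 such that the function R ↦ ( r(R) − R − R² log R ) / R² is bounded on (0,δ). (In the paper's notation: r = R + R² log R + O(R²) as R → 0⁺; in particular the coordinate transformation is polyhomogeneous, not smooth, at R = 0.) -/

import Mathlib

open Real intervalIntegral

lemma exp_quad (t : ℝ) (h0 : 0 < t) (h1 : t ≤ 1) :
    |Real.exp t - 1 - t| ≤ t ^ 2 := by
  have habs : |t| ≤ 1 := by rw [abs_of_pos h0]; exact h1
  have h := Real.exp_bound habs (n := 2) (by norm_num)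
  simp [Finset.sum_range_succ] at h
  have h2 : Real.exp t - 1 - t = Real.exp t - (1 + t) := by ring
  rw [h2]
  nlinarith [sq_nonneg t]

theorem stmt_2
    (F : ℝ → ℝ) (hF : ∀ R, F R = ∫ t in R..(1:ℝ), Real.exp t / t ^ 2)
    (r : ℝ → ℝ) (hr : ∀ R, r R = (F R)⁻¹) :
    ∃ δ > (0:ℝ), ∃ C : ℝ, ∀ R ∈ Set.Ioo (0:ℝ) δ,
      |(r R - R - R^2 * Real.log R) / R^2| ≤ C := by
  refine ⟨1/4, by norm_num, 16, ?_⟩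
  rintro R ⟨hR0, hR4⟩
  have hR1 : R < 1 := by linarith
  have hRne : R ≠ 0 := ne_of_gt hR0
  have hRle1 : R ≤ 1 := le_of_lt hR1
  have hmem : (0:ℝ) ∉ Set.uIcc R 1 := by
    rw [Set.uIcc_of_le hRle1]
    intro h
    exact absurd h.1 (not_le.mpr hR0)
  -- split of the integrand
  set g : ℝ → ℝ := fun t => (Real.exp t - 1 - t) / t ^ 2 with hg
  have hgc : ContinuousOn g (Set.uIcc R 1) := by
    apply ContinuousOn.div
    · fun_prop
    · fun_prop
    · intro t ht
      rw [Set.uIcc_of_le hRle1] at ht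
      have := lt_of_lt_of_le hR0 ht.1
      positivity
  have hic : IntervalIntegrable g MeasureTheory.volume R 1 :=
    hgc.intervalIntegrable
  have hi1 : IntervalIntegrable (fun t : ℝ => t ^ (-2 : ℤ)) MeasureTheory.volume R 1 :=
    (intervalIntegrable_zpow (Or.inr hmem))
  have hi2 : IntervalIntegrable (fun t : ℝ => t⁻¹) MeasureTheory.volume R 1 := by
    apply ContinuousOn.intervalIntegrable
    apply ContinuousOn.inv₀ continuousOn_id
    intro t ht
    rw [Set.uIcc_of_le hRle1] at ht
    exact ne_of_gt (lt_of_lt_of_le hR0 ht.1)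
  have hsplit : F R = (∫ t in R..(1:ℝ), (t ^ (-2:ℤ))) + ((∫ t in R..(1:ℝ), t⁻¹) + ∫ t in R..(1:ℝ), g t) := by
    rw [hF, ← intervalIntegral.integral_add hi2 hic, ← intervalIntegral.integral_add hi1 (hi2.add hic)]
    apply intervalIntegral.integral_congr
    intro t ht
    rw [Set.uIcc_of_le hRle1] at ht
    have ht0 : 0 < t := lt_of_lt_of_le hR0 ht.1
    have htne : t ≠ 0 := ne_of_gt ht0
    show Real.exp t / t ^ 2 = t ^ (-2:ℤ) + (t⁻¹ + g t)
    rw [zpow_neg, zpow_two, hg]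
    simp only
    field_simp
    ring
  have h1 : (∫ t in R..(1:ℝ), (t ^ (-2:ℤ))) = R⁻¹ - 1 := by
    rw [integral_zpow (Or.inr ⟨by norm_num, hmem⟩)]
    norm_num
    ring
  have h2 : (∫ t in R..(1:ℝ), t⁻¹) = -Real.log R := by
    rw [integral_inv hmem, one_div, Real.log_inv]
  have hgbd : |∫ t in R..(1:ℝ), g t| ≤ 1 := by
    have := intervalIntegral.norm_integral_le_of_norm_le_const (C := 1)
      (f := g) (a := R) (b := 1) ?_
    · rw [Real.norm_eq_abs] at this
      calc |∫ t in R..(1:ℝ), g t| ≤ 1 * |1 - R| := this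
        _ ≤ 1 := by rw [one_mul, abs_of_nonneg (by linarith)]; linarith
    · intro t ht
      rw [Set.uIoc_of_le hRle1] at ht
      have ht0 : 0 < t := lt_trans hR0 ht.1
      have ht2 : (0:ℝ) < t ^ 2 := by positivity
      rw [Real.norm_eq_abs, hg]
      simp only
      rw [abs_div, abs_of_pos ht2, div_le_one ht2]
      exact exp_quad t ht0 ht.2
  -- F R = R⁻¹ - log R + E, |E| ≤ 2
  set E : ℝ := (∫ t in R..(1:ℝ), g t) - 1 with hE
  have hFeq : F R = R⁻¹ - Real.log R + E := by
    rw [hsplit, h1, h2, hE]; ring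
  have hEbd : |E| ≤ 2 := by
    rw [hE]
    calc |(∫ t in R..(1:ℝ), g t) - 1| ≤ |∫ t in R..(1:ℝ), g t| + 1 := by
          simpa using abs_sub (∫ t in R..(1:ℝ), g t) 1
      _ ≤ 2 := by linarith
  -- log estimates
  have hlogneg : Real.log R < 0 := Real.log_neg hR0 hR1
  have hRlog : R * (-Real.log R) ≤ 1 := by
    have h := Real.log_le_sub_one_of_pos (show (0:ℝ) < R⁻¹ by positivity)
    rw [Real.log_inv] at h
    have : -Real.log R ≤ R⁻¹ := by linarith [inv_nonneg.mpr (le_of_lt hR0) ]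
    calc R * (-Real.log R) ≤ R * R⁻¹ := by
          apply mul_le_mul_of_nonneg_left this (le_of_lt hR0)
      _ = 1 := mul_inv_cancel₀ hRne
  have hRlog2 : R * (Real.log R) ^ 2 ≤ 4 := by
    have hs0 : 0 < Real.sqrt R := Real.sqrt_pos.mpr hR0
    have hls : Real.log R = 2 * Real.log (Real.sqrt R) := by
      rw [Real.log_sqrt (le_of_lt hR0)]; ring
    have h := Real.log_le_sub_one_of_pos (show (0:ℝ) < (Real.sqrt R)⁻¹ by positivity)
    rw [Real.log_inv] at h
    have hb : -Real.log (Real.sqrt R) ≤ (Real.sqrt R)⁻¹ := by linarith [inv_nonneg.mpr (le_of_lt hs0)]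
    have hbn : 0 ≤ -Real.log (Real.sqrt R) := by
      have : Real.log (Real.sqrt R) < 0 := Real.log_neg hs0 (by
        rw [show (1:ℝ) = Real.sqrt 1 by simp]
        exact Real.sqrt_lt_sqrt (le_of_lt hR0) hR1)
      linarith
    have hsq : (Real.log (Real.sqrt R)) ^ 2 ≤ ((Real.sqrt R)⁻¹) ^ 2 := by
      rw [show (Real.log (Real.sqrt R))^2 = (-Real.log (Real.sqrt R))^2 by ring]
      exact pow_le_pow_left₀ hbn hb 2
    have hinv : ((Real.sqrt R)⁻¹) ^ 2 = R⁻¹ := by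
      rw [inv_pow, Real.sq_sqrt (le_of_lt hR0)]
    rw [hls]
    have : (2 * Real.log (Real.sqrt R)) ^ 2 = 4 * (Real.log (Real.sqrt R)) ^ 2 := by ring
    rw [this]
    calc R * (4 * (Real.log (Real.sqrt R)) ^ 2) ≤ R * (4 * R⁻¹) := by
          apply mul_le_mul_of_nonneg_left _ (le_of_lt hR0)
          have := hsq.trans_eq hinv
          linarith
      _ = 4 := by field_simp
  -- F lower bound
  have hFlb : 1 / (2 * R) ≤ F R := by
    rw [hFeq]
    have hEl : -2 ≤ E := by linarith [abs_le.mp hEbd]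
    have h4 : 4 ≤ R⁻¹ := by
      rw [le_inv_comm₀] <;> try positivity
      · linarith
    have : 1 / (2 * R) = R⁻¹ / 2 := by field_simp
    rw [this]
    nlinarith [inv_pos.mpr hR0]
  have hFpos : 0 < F R := lt_of_lt_of_le (by positivity) hFlb
  -- key expansion
  have hexp : 1 - F R * (R + R ^ 2 * Real.log R)
      = R ^ 2 * (Real.log R) ^ 2 - R * E * (1 + R * Real.log R) := by
    rw [hFeq]; field_simp; ring
  have hRlogmem : -1 ≤ R * Real.log R ∧ R * Real.log R ≤ 0 := by
    constructor
    · nlinarith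
    · nlinarith
  have habs1 : |1 + R * Real.log R| ≤ 1 := by
    rw [abs_le]; constructor <;> nlinarith [hRlogmem.1, hRlogmem.2]
  have hkey : |1 - F R * (R + R ^ 2 * Real.log R)| ≤ 8 * R := by
    rw [hexp]
    have t1 : |R ^ 2 * (Real.log R) ^ 2| ≤ 4 * R := by
      rw [abs_of_nonneg (by positivity)]
      nlinarith
    have t2 : |R * E * (1 + R * Real.log R)| ≤ 2 * R := by
      rw [abs_mul, abs_mul, abs_of_pos hR0]
      calc R * |E| * |1 + R * Real.log R| ≤ R * 2 * 1 := by
            apply mul_le_mul _ habs1 (abs_nonneg _) (by positivity)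
            exact mul_le_mul_of_nonneg_left hEbd (le_of_lt hR0)
        _ = 2 * R := by ring
    calc |R ^ 2 * (Real.log R) ^ 2 - R * E * (1 + R * Real.log R)|
        ≤ |R ^ 2 * (Real.log R) ^ 2| + |R * E * (1 + R * Real.log R)| := abs_sub _ _
      _ ≤ 8 * R := by linarith
  -- conclude
  have hre : r R - R - R ^ 2 * Real.log R = (1 - F R * (R + R ^ 2 * Real.log R)) / F R := by
    rw [hr]; field_simp; ring
  have hfinal : |r R - R - R ^ 2 * Real.log R| ≤ 16 * R ^ 2 := by
    rw [hre, abs_div, abs_of_pos hFpos, div_le_iff₀ hFpos]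
    calc |1 - F R * (R + R ^ 2 * Real.log R)| ≤ 8 * R := hkey
      _ ≤ 16 * R ^ 2 * (1 / (2 * R)) := by
          rw [show 16 * R ^ 2 * (1 / (2 * R)) = 8 * R by field_simp; ring]
      _ ≤ 16 * R ^ 2 * F R := by
          apply mul_le_mul_of_nonneg_left hFlb (by positivity)
  rw [abs_div, abs_of_pos (show (0:ℝ) < R ^ 2 by positivity), div_le_iff₀ (by positivity : (0:ℝ) < R ^ 2)]
  linarith [hfinal]
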